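/- Let (X,d) be a metric space in which every open ball B(x,r) is relatively compact (has compact closure). Then the following are equivalent: (a) (X,d) satisfies the chain condition, i.e., there exists C ≥ 1 such that d_ε(x,y) ≤ C d(x,y) for all ε > 0 and all x,y ∈ X; (b) there exist C' ≥ 1 and a geodesic metric ρ on X such that C'^{-1} d(x,y) ≤ ρ(x,y) ≤ C' d(x,y) for all x,y ∈ X. -/

import Mathlib

open Metric ENNReal Filter Topology

/-- The `ε`-chain metric `d_ε` associated with a distance function `ρ`:
the infimum of total lengths of `ε`-chains from `x` to `y` (infimum of the
empty set being `∞`). An `ε`-chain from `x` to `y` is a finite sequence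
`x_0, …, x_N` (`N ≥ 1`) with `x_0 = x`, `x_N = y` and `ρ (x_i) (x_{i+1}) < ε`. -/
noncomputable def chainDist {X : Type*} (ρ : X → X → ℝ) (ε : ℝ) (x y : X) : ℝ≥0∞ :=
  ⨅ c : {c : ℕ × (ℕ → X) // 0 < c.1 ∧ c.2 0 = x ∧ c.2 c.1 = y ∧
      ∀ i < c.1, ρ (c.2 i) (c.2 (i + 1)) < ε},
    ∑ i ∈ Finset.range c.val.1, ENNReal.ofReal (ρ (c.val.2 i) (c.val.2 (i + 1)))

/-- `ρ : X → X → ℝ` is a metric on `X`. -/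
def IsMetricDist {X : Type*} (ρ : X → X → ℝ) : Prop :=
  (∀ x y, ρ x y = ρ y x) ∧ (∀ x y, ρ x y = 0 ↔ x = y) ∧ (∀ x y z, ρ x z ≤ ρ x y + ρ y z)

/-- `ρ` is a geodesic distance: any two points are joined by a curve `γ : [0,1] → X`
with `ρ (γ s) (γ t) = |s − t| ρ(x,y)`. -/
def IsGeodesicDist {X : Type*} (ρ : X → X → ℝ) : Prop :=
  ∀ x y : X, ∃ γ : ℝ → X, γ 0 = x ∧ γ 1 = y ∧
    ∀ s ∈ Set.Icc (0 : ℝ) 1, ∀ t ∈ Set.Icc (0 : ℝ) 1, ρ (γ s) (γ t) = |s - t| * ρ x y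


section Aux
variable {X : Type*} [MetricSpace X]

lemma dist_le_sum_range (f : ℕ → X) : ∀ N, dist (f 0) (f N) ≤ ∑ i ∈ Finset.range N, dist (f i) (f (i+1)) := by
  intro N
  induction N with
  | zero => simp
  | succ n ih =>
    rw [Finset.sum_range_succ]
    exact (dist_triangle (f 0) (f n) (f (n+1))).trans (by linarith)

lemma chainDist_le_chain {ε : ℝ} {x y : X} (N : ℕ) (f : ℕ → X) (hN : 0 < N)
    (h0 : f 0 = x) (hN' : f N = y) (hlt : ∀ i < N, dist (f i) (f (i+1)) < ε) :
    chainDist dist ε x y ≤ ∑ i ∈ Finset.range N, ENNReal.ofReal (dist (f i) (f (i+1))) :=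
  iInf_le (fun c : {c : ℕ × (ℕ → X) // 0 < c.1 ∧ c.2 0 = x ∧ c.2 c.1 = y ∧
      ∀ i < c.1, dist (c.2 i) (c.2 (i + 1)) < ε} =>
    ∑ i ∈ Finset.range c.val.1, ENNReal.ofReal (dist (c.val.2 i) (c.val.2 (i + 1)))) ⟨(N, f), hN, h0, hN', hlt⟩

lemma ofReal_dist_le_chainDist (ε : ℝ) (x y : X) :
    ENNReal.ofReal (dist x y) ≤ chainDist dist ε x y := by
  refine le_iInf fun c => ?_
  obtain ⟨⟨N, f⟩, hN, h0, hN', -⟩ := c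
  replace h0 : f 0 = x := h0
  replace hN' : f N = y := hN'
  show ENNReal.ofReal (dist x y) ≤ ∑ i ∈ Finset.range N, ENNReal.ofReal (dist (f i) (f (i+1)))
  rw [← ENNReal.ofReal_sum_of_nonneg (fun i _ => dist_nonneg)]
  refine ENNReal.ofReal_le_ofReal ?_
  have := dist_le_sum_range f N
  rw [h0, hN'] at this
  exact this

lemma chainDist_self {ε : ℝ} (hε : 0 < ε) (x : X) : chainDist dist ε x x = 0 := by
  refine le_antisymm ?_ zero_le
  have := chainDist_le_chain (x := x) (y := x) (ε := ε) 1 (fun _ => x) one_pos rfl rfl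
    (by intro i _; simpa using hε)
  simpa using this

lemma chainDist_anti {ε ε' : ℝ} (h : ε ≤ ε') (x y : X) :
    chainDist dist ε' x y ≤ chainDist dist ε x y := by
  refine le_iInf fun c => ?_
  obtain ⟨⟨N, f⟩, hN, h0, hN', hlt⟩ := c
  exact le_trans (chainDist_le_chain N f hN h0 hN' (fun i hi => (hlt i hi).trans_le h)) le_rfl

lemma chainDist_comm (ε : ℝ) (x y : X) : chainDist dist ε x y = chainDist dist ε y x := by
  have key : ∀ x y : X, chainDist dist ε x y ≤ chainDist dist ε y x := by
    intro x y
    refine le_iInf fun c => ?_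
    obtain ⟨⟨N, f⟩, hN, h0, hN', hlt⟩ := c
    replace hN : 0 < N := hN
    replace h0 : f 0 = y := h0
    replace hN' : f N = x := hN'
    replace hlt : ∀ i < N, dist (f i) (f (i+1)) < ε := hlt
    show chainDist dist ε x y ≤ ∑ i ∈ Finset.range N, ENNReal.ofReal (dist (f i) (f (i+1)))
    calc chainDist dist ε x y
        ≤ ∑ i ∈ Finset.range N, ENNReal.ofReal
            (dist ((fun i => f (N - i)) i) ((fun i => f (N - i)) (i+1))) := by
          refine chainDist_le_chain N _ hN (by simpa using hN') (by simpa using h0) ?_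
          intro i hi
          show dist (f (N - i)) (f (N - (i+1))) < ε
          have h1 : N - i = N - (i+1) + 1 := by omega
          rw [h1, dist_comm]
          exact hlt _ (by omega)
      _ = ∑ i ∈ Finset.range N, ENNReal.ofReal (dist (f i) (f (i+1))) := by
          rw [← Finset.sum_range_reflect (fun j => ENNReal.ofReal (dist (f j) (f (j+1)))) N]
          refine Finset.sum_congr rfl fun i hi => ?_
          have hi' : i < N := Finset.mem_range.1 hi
          show ENNReal.ofReal (dist (f (N - i)) (f (N - (i+1)))) = _
          rw [dist_comm]
          have e1 : N - (i+1) = N - 1 - i := by omega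
          have e2 : N - i = N - 1 - i + 1 := by omega
          rw [e1, e2]
  exact le_antisymm (key x y) (key y x)

lemma sum_range_split {M : Type*} [AddCommMonoid M] (g : ℕ → M) (m n : ℕ) :
    ∑ i ∈ Finset.range (m + n), g i = ∑ i ∈ Finset.range m, g i + ∑ i ∈ Finset.range n, g (m + i) := by
  induction n with
  | zero => simp
  | succ k ih => rw [← add_assoc, Finset.sum_range_succ, ih, Finset.sum_range_succ, add_assoc]

lemma chainDist_triangle (ε : ℝ) (x y z : X) :
    chainDist dist ε x z ≤ chainDist dist ε x y + chainDist dist ε y z := by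
  conv_rhs => rw [chainDist, chainDist, ENNReal.iInf_add]
  refine le_iInf fun c => ?_
  rw [ENNReal.add_iInf]
  refine le_iInf fun c' => ?_
  obtain ⟨⟨N, f⟩, hN, h0, hN', hlt⟩ := c
  obtain ⟨⟨M, g⟩, hM, hg0, hM', hlt'⟩ := c'
  replace hN : 0 < N := hN
  replace h0 : f 0 = x := h0
  replace hN' : f N = y := hN'
  replace hlt : ∀ i < N, dist (f i) (f (i+1)) < ε := hlt
  replace hM : 0 < M := hM
  replace hg0 : g 0 = y := hg0
  replace hM' : g M = z := hM'
  replace hlt' : ∀ i < M, dist (g i) (g (i+1)) < ε := hlt'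
  show chainDist dist ε x z ≤ (∑ i ∈ Finset.range N, ENNReal.ofReal (dist (f i) (f (i+1)))) + ∑ i ∈ Finset.range M, ENNReal.ofReal (dist (g i) (g (i+1)))
  set h : ℕ → X := fun i => if i < N then f i else g (i - N) with hh
  have hfg : f N = g 0 := by rw [hN', hg0]
  have hlink : ∀ i < N + M, dist (h i) (h (i+1)) < ε := by
    intro i hi
    by_cases hiN : i + 1 ≤ N
    · have h1 : h i = f i := by simp [hh, show i < N by omega]
      have h2 : h (i+1) = f (i+1) := by
        rcases eq_or_lt_of_le hiN with heq | hlt2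
        · simp only [hh]
          rw [if_neg (by omega), heq, Nat.sub_self, ← hfg]
        · simp [hh, hlt2]
      rw [h1, h2]; exact hlt i (by omega)
    · have h1 : h i = g (i - N) := by simp only [hh]; rw [if_neg (by omega)]
      have h2 : h (i+1) = g (i + 1 - N) := by simp only [hh]; rw [if_neg (by omega)]
      rw [h1, h2, (by omega : i + 1 - N = (i - N) + 1)]
      exact hlt' (i - N) (by omega)
  have hsum : ∑ i ∈ Finset.range (N + M), ENNReal.ofReal (dist (h i) (h (i+1)))
      = ∑ i ∈ Finset.range N, ENNReal.ofReal (dist (f i) (f (i+1)))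
        + ∑ i ∈ Finset.range M, ENNReal.ofReal (dist (g i) (g (i+1))) := by
    rw [sum_range_split]
    congr 1
    · refine Finset.sum_congr rfl fun i hi => ?_
      have hi' : i < N := Finset.mem_range.1 hi
      have e1 : h i = f i := by simp [hh, hi']
      have e2 : h (i+1) = f (i+1) := by
        by_cases h2 : i + 1 < N
        · simp [hh, h2]
        · have h3 : i + 1 = N := by omega
          simp only [hh]
          rw [if_neg (by omega), h3, Nat.sub_self, ← hfg]
      rw [e1, e2]
    · refine Finset.sum_congr rfl fun i hi => ?_
      have hi' : i < M := Finset.mem_range.1 hi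
      have e1 : h (N + i) = g i := by
        simp only [hh]; rw [if_neg (by omega)]; congr 1; omega
      have e2 : h (N + i + 1) = g (i + 1) := by
        simp only [hh]; rw [if_neg (by omega)]; congr 1; omega
      rw [e1, e2]
  calc chainDist dist ε x z
      ≤ ∑ i ∈ Finset.range (N + M), ENNReal.ofReal (dist (h i) (h (i+1))) := by
        refine chainDist_le_chain (N + M) h (by omega) ?_ ?_ hlink
        · simp [hh, hN, h0]
        · simp only [hh]
          rw [if_neg (by omega)]
          simpa [Nat.add_sub_cancel_left] using hM'
    _ = _ := hsum

end Aux



noncomputable def dyadicSeq {X : Type*} (m : X → X → X) (x y : X) : ℕ → ℕ → X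
  | 0, k => if k = 0 then x else y
  | n+1, k => if k % 2 = 0 then dyadicSeq m x y n (k/2)
      else m (dyadicSeq m x y n (k/2)) (dyadicSeq m x y n (k/2+1))

section Dyadic

variable {X : Type*} [MetricSpace X] (m : X → X → X) (x y : X)

lemma dyadicSeq_even (n j : ℕ) : dyadicSeq m x y (n+1) (2*j) = dyadicSeq m x y n j := by
  simp [dyadicSeq, Nat.mul_div_cancel_left, Nat.mul_mod_right]

lemma dyadicSeq_odd (n j : ℕ) :
    dyadicSeq m x y (n+1) (2*j+1) = m (dyadicSeq m x y n j) (dyadicSeq m x y n (j+1)) := by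
  have h1 : (2*j+1) % 2 = 1 := by omega
  have h2 : (2*j+1) / 2 = j := by omega
  simp [dyadicSeq, h1, h2]

lemma dyadicSeq_zero (n : ℕ) : dyadicSeq m x y n 0 = x := by
  induction n with
  | zero => simp [dyadicSeq]
  | succ n ih => simpa using (dyadicSeq_even m x y n 0).trans ih

lemma dyadicSeq_top (n : ℕ) : dyadicSeq m x y n (2^n) = y := by
  induction n with
  | zero => simp [dyadicSeq]
  | succ n ih =>
    have : 2^(n+1) = 2 * 2^n := by ring
    rw [this, dyadicSeq_even, ih]

lemma dyadicSeq_compat (p n k : ℕ) : dyadicSeq m x y (n+p) (k * 2^p) = dyadicSeq m x y n k := by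
  induction p with
  | zero => simp
  | succ p ih =>
    have e1 : n + (p+1) = (n+p) + 1 := by omega
    have e2 : k * 2^(p+1) = 2 * (k * 2^p) := by ring
    rw [e1, e2, dyadicSeq_even, ih]

end Dyadic

lemma geodesic_of_midpoints {X : Type*} [MetricSpace X] [CompleteSpace X]
    (ρ : X → X → ℝ) (L : ℝ)
    (hsymm : ∀ a b, ρ a b = ρ b a)
    (hself : ∀ a, ρ a a = 0)
    (htri : ∀ a b c, ρ a c ≤ ρ a b + ρ b c)
    (hlb : ∀ a b, dist a b ≤ ρ a b)
    (hub : ∀ a b, ρ a b ≤ L * dist a b)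
    (hmid : ∀ a b, ∃ z, ρ a z = ρ a b / 2 ∧ ρ z b = ρ a b / 2) :
    IsGeodesicDist ρ := by
  have hnn : ∀ a b : X, 0 ≤ ρ a b := fun a b => dist_nonneg.trans (hlb a b)
  choose m hm1 hm2 using hmid
  intro x y
  set dy := dyadicSeq m x y with hdy
  have hdz : ∀ n, dy n 0 = x := fun n => by rw [hdy]; exact dyadicSeq_zero m x y n
  have hdt : ∀ n, dy n (2^n) = y := fun n => by rw [hdy]; exact dyadicSeq_top m x y n
  have hxynn : 0 ≤ ρ x y := hnn x y
  -- adjacent points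
  have hadj : ∀ n, ∀ k < 2^n, ρ (dy n k) (dy n (k+1)) = ρ x y / 2^n := by
    intro n
    induction n with
    | zero =>
      intro k hk
      have : k = 0 := by omega
      subst this
      simp [hdy, dyadicSeq]
    | succ n ih =>
      intro k hk
      have h2 : (2:ℕ)^(n+1) = 2 * 2^n := by ring
      rcases Nat.even_or_odd k with ⟨j, hj⟩ | ⟨j, hj⟩
      · have hjk : k = 2*j := by omega
        subst hjk
        have hj' : j < 2^n := by omega
        rw [hdy] at *
        rw [dyadicSeq_odd m x y n j, dyadicSeq_even m x y n j, hm1, ih j hj']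
        ring
      · have hjk : k = 2*j+1 := by omega
        subst hjk
        have hj' : j < 2^n := by omega
        have e : 2*j+1+1 = 2*(j+1) := by ring
        rw [hdy] at *
        rw [e, dyadicSeq_odd m x y n j, dyadicSeq_even m x y n (j+1), hm2, ← hdy, ih j hj']
        ring
  -- upper bound
  have hupper : ∀ n j k, k + j ≤ 2^n → ρ (dy n k) (dy n (k+j)) ≤ j * (ρ x y / 2^n) := by
    intro n j
    induction j with
    | zero => intro k _; simp [hself]
    | succ j ih =>
      intro k hk
      have h1 := ih k (by omega)
      have h2 := hadj n (k+j) (by omega)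
      have := htri (dy n k) (dy n (k+j)) (dy n (k+j+1))
      have e : k + (j+1) = (k+j)+1 := by omega
      rw [e]
      push_cast
      nlinarith [this, h1, h2]
  -- exact value
  have heq : ∀ n k l, k ≤ l → l ≤ 2^n → ρ (dy n k) (dy n l) = ((l:ℝ) - k) * (ρ x y / 2^n) := by
    intro n k l hkl hl
    have hup : ρ (dy n k) (dy n l) ≤ ((l:ℝ) - k) * (ρ x y / 2^n) := by
      have := hupper n (l - k) k (by omega)
      rw [show k + (l - k) = l from by omega] at this
      have e : ((l - k : ℕ) : ℝ) = (l:ℝ) - k := by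
        push_cast [hkl]; ring
      rwa [e] at this
    have hlow : ((l:ℝ) - k) * (ρ x y / 2^n) ≤ ρ (dy n k) (dy n l) := by
      have h1 : ρ x y ≤ ρ x (dy n k) + ρ (dy n k) (dy n l) + ρ (dy n l) y := by
        have t1 := htri x (dy n k) y
        have t2 := htri (dy n k) (dy n l) y
        linarith
      have h2 : ρ x (dy n k) ≤ (k:ℝ) * (ρ x y / 2^n) := by
        have := hupper n k 0 (by omega)
        rw [hdz n] at this
        simpa using this
      have h3 : ρ (dy n l) y ≤ ((2^n - l : ℕ):ℝ) * (ρ x y / 2^n) := by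
        have := hupper n (2^n - l) l (by omega)
        rw [show l + (2^n - l) = 2^n from by omega, hdt n] at this
        exact this
      have e3 : ((2^n - l : ℕ):ℝ) = (2^n : ℝ) - l := by push_cast [hl]; ring
      rw [e3] at h3
      have hpow : (0:ℝ) < 2^n := by positivity
      have hxy : ρ x y = (2^n : ℝ) * (ρ x y / 2^n) := by field_simp
      have hc : ((2:ℝ)^n : ℝ) = ((2^n : ℕ) : ℝ) := by push_cast; ring
      nlinarith [h1, h2, h3]
    linarith
  -- symmetric version
  have hsymeq : ∀ n a b, a ≤ 2^n → b ≤ 2^n →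
      ρ (dy n a) (dy n b) = |(a:ℝ)/2^n - (b:ℝ)/2^n| * ρ x y := by
    intro n a b ha hb
    have hpow : (0:ℝ) < 2^n := by positivity
    rcases le_total a b with h | h
    · have hab : (a:ℝ) ≤ (b:ℝ) := by exact_mod_cast h
      rw [heq n a b h hb, abs_of_nonpos (by
        have : (a:ℝ)/2^n ≤ (b:ℝ)/2^n := by gcongr
        linarith)]
      field_simp
      try ring
    · have hab : (b:ℝ) ≤ (a:ℝ) := by exact_mod_cast h
      rw [hsymm, heq n b a h ha, abs_of_nonneg (by
        have : (b:ℝ)/2^n ≤ (a:ℝ)/2^n := by gcongr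
        linarith)]
      field_simp
      try ring
  -- clamping and floor approximations
  set u : ℝ → ℝ := fun t => max 0 (min t 1) with hu
  have hu0 : ∀ t, 0 ≤ u t := fun t => le_max_left _ _
  have hu1 : ∀ t, u t ≤ 1 := fun t => max_le (by norm_num) (min_le_right _ _)
  have huIcc : ∀ t ∈ Set.Icc (0:ℝ) 1, u t = t := by
    intro t ht
    simp [hu, min_eq_left ht.2, max_eq_right ht.1]
  set kn : ℝ → ℕ → ℕ := fun t n => ⌊u t * 2^n⌋₊ with hknd
  have hkn_le : ∀ t n, kn t n ≤ 2^n := by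
    intro t n
    have hpow : (0:ℝ) < 2^n := by positivity
    have h1 : u t * 2^n ≤ ((2^n : ℕ) : ℝ) := by
      push_cast
      nlinarith [hu1 t, hu0 t]
    calc kn t n ≤ ⌊((2^n : ℕ) : ℝ)⌋₊ := Nat.floor_mono h1
      _ = 2^n := Nat.floor_natCast _
  have hkn_approx : ∀ t n, |u t - (kn t n : ℝ)/2^n| ≤ (2^n)⁻¹ := by
    intro t n
    have hpow : (0:ℝ) < 2^n := by positivity
    have h1 : ((kn t n : ℕ) : ℝ) ≤ u t * 2^n := Nat.floor_le (by positivity)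
    have h2 : u t * 2^n < (kn t n : ℝ) + 1 := Nat.lt_floor_add_one _
    have e : (kn t n : ℝ)/2^n ≤ u t := by rw [div_le_iff₀ hpow]; exact h1
    rw [abs_of_nonneg (by linarith)]
    have hnum : u t * 2^n - (kn t n : ℝ) ≤ 1 := by linarith
    calc u t - (kn t n:ℝ)/2^n = (u t * 2^n - (kn t n : ℝ))/2^n := by field_simp
      _ ≤ 1/2^n := by gcongr
      _ = (2^n)⁻¹ := one_div _
  set S : ℝ → ℕ → X := fun t n => dy n (kn t n) with hS
  have hS_level : ∀ s t n, ρ (S s n) (S t n)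
      = |(kn s n:ℝ)/2^n - (kn t n:ℝ)/2^n| * ρ x y := by
    intro s t n
    exact hsymeq n _ _ (hkn_le s n) (hkn_le t n)
  -- Cauchy
  have hScauchy : ∀ t, CauchySeq (fun n => S t n) := by
    intro t
    apply cauchySeq_of_le_geometric (1/2 : ℝ) (2 * ρ x y) (by norm_num)
    intro n
    have hpow : (0:ℝ) < 2^n := by positivity
    have hpow1 : (0:ℝ) < 2^(n+1) := by positivity
    have e1 : S t n = dy (n+1) (2 * kn t n) := (dyadicSeq_even m x y n (kn t n)).symm
    have hle1 : 2 * kn t n ≤ 2^(n+1) := by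
      have := hkn_le t n
      omega
    calc dist (S t n) (S t (n+1)) ≤ ρ (S t n) (S t (n+1)) := hlb _ _
      _ = |(2 * kn t n:ℝ)/2^(n+1) - (kn t (n+1):ℝ)/2^(n+1)| * ρ x y := by
          rw [e1]
          have := hsymeq (n+1) (2 * kn t n) (kn t (n+1)) hle1 (hkn_le t (n+1))
          simpa using this
      _ ≤ ((2^n)⁻¹ + (2^(n+1))⁻¹) * ρ x y := by
          refine mul_le_mul_of_nonneg_right ?_ hxynn
          have h1 := hkn_approx t n
          have h2 := hkn_approx t (n+1)
          have e2 : (2 * (kn t n : ℕ) : ℝ)/2^(n+1) = (kn t n : ℝ)/2^n := by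
            push_cast
            field_simp
            ring
          rw [e2]
          calc |(kn t n:ℝ)/2^n - (kn t (n+1):ℝ)/2^(n+1)|
              ≤ |(kn t n:ℝ)/2^n - u t| + |u t - (kn t (n+1):ℝ)/2^(n+1)| := abs_sub_le _ _ _
            _ ≤ (2^n)⁻¹ + (2^(n+1))⁻¹ := by
                refine add_le_add ?_ h2
                rw [abs_sub_comm]
                exact h1
      _ ≤ 2 * ρ x y * (1/2)^n := by
          have e3 : ((1:ℝ)/2)^n = (2^n)⁻¹ := by rw [one_div, inv_pow]
          have h4 : ((2:ℝ)^(n+1))⁻¹ ≤ (2^n)⁻¹ := by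
            rw [inv_le_inv₀ hpow1 hpow]
            exact pow_le_pow_right₀ (by norm_num) (by omega)
          rw [e3]
          nlinarith [hxynn, (inv_nonneg.2 hpow.le : (0:ℝ) ≤ (2^n)⁻¹)]
  have hconv : ∀ t : ℝ, ∃ p : X, Tendsto (fun n => S t n) atTop (𝓝 p) :=
    fun t => cauchySeq_tendsto_of_complete (hScauchy t)
  choose γ hγ using hconv
  have hdist0 : ∀ t, Tendsto (fun n => dist (S t n) (γ t)) atTop (𝓝 0) := by
    intro t
    exact tendsto_iff_dist_tendsto_zero.1 (hγ t)
  refine ⟨γ, ?_, ?_, ?_⟩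
  · have hS0 : ∀ n, S 0 n = x := by
      intro n
      have h1 : u 0 = 0 := by simp [hu]
      have h2 : kn 0 n = 0 := by simp [hknd, h1]
      rw [hS]
      simp only [h2]
      exact dyadicSeq_zero m x y n
    have := hγ 0
    rw [show (fun n => S 0 n) = (fun _ => x) from funext hS0] at this
    exact tendsto_nhds_unique this tendsto_const_nhds
  · have hS1 : ∀ n, S 1 n = y := by
      intro n
      have h1 : u 1 = 1 := by simp [hu]
      have h2 : kn 1 n = 2^n := by
        rw [hknd]
        simp only [h1, one_mul]
        rw [show ((2:ℝ)^n) = ((2^n : ℕ) : ℝ) from by push_cast; ring]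
        exact Nat.floor_natCast _
      rw [hS]
      simp only [h2]
      exact dyadicSeq_top m x y n
    have := hγ 1
    rw [show (fun n => S 1 n) = (fun _ => y) from funext hS1] at this
    exact tendsto_nhds_unique this tendsto_const_nhds
  · intro s hs t ht
    have hks : Tendsto (fun n => (kn s n : ℝ)/2^n) atTop (𝓝 s) := by
      have h0 : Tendsto (fun n : ℕ => ((1:ℝ)/2)^n) atTop (𝓝 0) :=
        tendsto_pow_atTop_nhds_zero_of_lt_one (by norm_num) (by norm_num)
      have hb : ∀ n : ℕ, ‖(kn s n : ℝ)/2^n - s‖ ≤ ((1:ℝ)/2)^n := by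
        intro n
        have := hkn_approx s n
        rw [huIcc s hs] at this
        rw [Real.norm_eq_abs, abs_sub_comm]
        calc |s - (kn s n : ℝ)/2^n| ≤ (2^n)⁻¹ := this
          _ = ((1:ℝ)/2)^n := by rw [one_div, inv_pow]
      have := squeeze_zero_norm hb h0
      have h2 := this.add (tendsto_const_nhds : Tendsto (fun _ : ℕ => s) atTop (𝓝 s))
      simpa using h2
    have hkt : Tendsto (fun n => (kn t n : ℝ)/2^n) atTop (𝓝 t) := by
      have h0 : Tendsto (fun n : ℕ => ((1:ℝ)/2)^n) atTop (𝓝 0) :=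
        tendsto_pow_atTop_nhds_zero_of_lt_one (by norm_num) (by norm_num)
      have hb : ∀ n : ℕ, ‖(kn t n : ℝ)/2^n - t‖ ≤ ((1:ℝ)/2)^n := by
        intro n
        have := hkn_approx t n
        rw [huIcc t ht] at this
        rw [Real.norm_eq_abs, abs_sub_comm]
        calc |t - (kn t n : ℝ)/2^n| ≤ (2^n)⁻¹ := this
          _ = ((1:ℝ)/2)^n := by rw [one_div, inv_pow]
      have := squeeze_zero_norm hb h0
      have h2 := this.add (tendsto_const_nhds : Tendsto (fun _ : ℕ => t) atTop (𝓝 t))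
      simpa using h2
    have hlim1 : Tendsto (fun n => ρ (S s n) (S t n)) atTop (𝓝 (|s - t| * ρ x y)) := by
      have := ((hks.sub hkt).abs).mul_const (ρ x y)
      simpa only [hS_level] using this
    have hlim2 : Tendsto (fun n => ρ (S s n) (S t n)) atTop (𝓝 (ρ (γ s) (γ t))) := by
      have hbdd : ∀ n, ‖ρ (S s n) (S t n) - ρ (γ s) (γ t)‖
          ≤ L * dist (S s n) (γ s) + L * dist (S t n) (γ t) := by
        intro n
        have t1 : ρ (S s n) (S t n) ≤ ρ (γ s) (γ t) + (L * dist (S s n) (γ s) + L * dist (S t n) (γ t)) := by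
          have a1 := htri (S s n) (γ s) (S t n)
          have a2 := htri (γ s) (γ t) (S t n)
          have b1 := hub (S s n) (γ s)
          have b2 := hub (S t n) (γ t)
          rw [hsymm (γ t) (S t n)] at a2
          linarith
        have t2 : ρ (γ s) (γ t) ≤ ρ (S s n) (S t n) + (L * dist (S s n) (γ s) + L * dist (S t n) (γ t)) := by
          have a1 := htri (γ s) (S s n) (γ t)
          have a2 := htri (S s n) (S t n) (γ t)
          have b1 := hub (S s n) (γ s)
          have b2 := hub (S t n) (γ t)
          rw [hsymm (γ s) (S s n)] at a1
          linarith
        rw [Real.norm_eq_abs, abs_le]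
        constructor <;> linarith
      have h0 : Tendsto (fun n => L * dist (S s n) (γ s) + L * dist (S t n) (γ t)) atTop (𝓝 0) := by
        have := ((hdist0 s).const_mul L).add ((hdist0 t).const_mul L)
        simpa using this
      have := squeeze_zero_norm hbdd h0
      have h2 := this.add (tendsto_const_nhds : Tendsto (fun _ : ℕ => ρ (γ s) (γ t)) atTop (𝓝 (ρ (γ s) (γ t))))
      simpa using h2
    exact tendsto_nhds_unique hlim2 hlim1



section Forward

variable {X : Type*} [MetricSpace X]

lemma forward_construction
    (hrel : ∀ (x : X) (r : ℝ), IsCompact (closure (Metric.ball x r)))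
    (C : ℝ) (hC : 1 ≤ C)
    (hch : ∀ ε : ℝ, 0 < ε → ∀ x y : X, chainDist dist ε x y ≤ ENNReal.ofReal (C * dist x y)) :
    ∃ ρ : X → X → ℝ, IsMetricDist ρ ∧ IsGeodesicDist ρ ∧
      ∀ x y : X, C⁻¹ * dist x y ≤ ρ x y ∧ ρ x y ≤ C * dist x y := by
  classical
  haveI hprop : ProperSpace X := ⟨fun x r =>
    IsCompact.of_isClosed_subset (hrel x (r+1)) isClosed_closedBall
      ((closedBall_subset_ball (lt_add_one r)).trans subset_closure)⟩
  set e : ℕ → ℝ := fun n => ((n:ℝ)+1)⁻¹ with he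
  have hepos : ∀ n, 0 < e n := fun n => by positivity
  have heanti : ∀ m n : ℕ, m ≤ n → e n ≤ e m := by
    intro m n h
    have h2 : ((m:ℝ)+1) ≤ ((n:ℝ)+1) := by exact_mod_cast Nat.add_le_add_right h 1
    exact inv_anti₀ (by positivity) h2
  have helim : Tendsto e atTop (𝓝 0) := by
    have := tendsto_one_div_add_atTop_nhds_zero_nat (𝕜 := ℝ)
    simpa [he, one_div] using this
  set R : X → X → ℝ≥0∞ := fun x y => ⨆ n : ℕ, chainDist dist (e n) x y with hR
  have hRle : ∀ x y : X, R x y ≤ ENNReal.ofReal (C * dist x y) :=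
    fun x y => iSup_le fun n => hch _ (hepos n) x y
  have hRne : ∀ x y : X, R x y ≠ ⊤ :=
    fun x y => ((hRle x y).trans_lt ofReal_lt_top).ne
  have hRge : ∀ x y : X, ENNReal.ofReal (dist x y) ≤ R x y :=
    fun x y => le_iSup_of_le 0 (ofReal_dist_le_chainDist _ _ _)
  have hDleR : ∀ (n : ℕ) (x y : X), chainDist dist (e n) x y ≤ R x y :=
    fun n x y => le_iSup (fun n => chainDist dist (e n) x y) n
  have hDne : ∀ (ε : ℝ) (x y : X), chainDist dist ε x y ≠ ⊤ → True := fun _ _ _ _ => trivial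
  set ρ : X → X → ℝ := fun x y => (R x y).toReal with hρ
  have hρub : ∀ x y : X, ρ x y ≤ C * dist x y := by
    intro x y
    exact ENNReal.toReal_le_of_le_ofReal (by positivity) (hRle x y)
  have hρlb : ∀ x y : X, dist x y ≤ ρ x y := by
    intro x y
    have := ENNReal.toReal_mono (hRne x y) (hRge x y)
    rwa [ENNReal.toReal_ofReal dist_nonneg] at this
  have hρnn : ∀ x y : X, 0 ≤ ρ x y := fun x y => dist_nonneg.trans (hρlb x y)
  have hRofReal : ∀ x y : X, R x y = ENNReal.ofReal (ρ x y) :=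
    fun x y => (ENNReal.ofReal_toReal (hRne x y)).symm
  have hρsymm : ∀ x y : X, ρ x y = ρ y x := by
    intro x y
    have h : R x y = R y x := iSup_congr fun n => chainDist_comm _ _ _
    rw [hρ]
    simp only [h]
  have hρself : ∀ x : X, ρ x x = 0 := by
    intro x
    have h : R x x = 0 := by
      refine le_antisymm (iSup_le fun n => ?_) zero_le
      rw [chainDist_self (hepos n) x]
    rw [hρ]
    simp only [h, ENNReal.toReal_zero]
  have hρtri : ∀ x y z : X, ρ x z ≤ ρ x y + ρ y z := by
    intro x y z
    have h : R x z ≤ R x y + R y z := by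
      refine iSup_le fun n => (chainDist_triangle (e n) x y z).trans ?_
      exact add_le_add (hDleR n x y) (hDleR n y z)
    have h2 := ENNReal.toReal_mono (by
      exact ENNReal.add_ne_top.2 ⟨hRne x y, hRne y z⟩) h
    rwa [ENNReal.toReal_add (hRne x y) (hRne y z)] at h2
  have hρeq0 : ∀ x y : X, ρ x y = 0 ↔ x = y := by
    intro x y
    constructor
    · intro h
      have := hρlb x y
      rw [h] at this
      exact dist_le_zero.1 this
    · rintro rfl
      exact hρself x
  -- midpoints
  have hmid : ∀ x y : X, ∃ z : X, ρ x z = ρ x y / 2 ∧ ρ z y = ρ x y / 2 := by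
    intro x y
    have hchains : ∀ n : ℕ, ∃ z : X, dist x z ≤ (ρ x y + e n)/2 ∧
        chainDist dist (e n) x z ≤ ENNReal.ofReal ((ρ x y + e n)/2) ∧
        chainDist dist (e n) z y ≤ ENNReal.ofReal ((ρ x y + e n)/2 + e n) := by
      intro n
      have hb : chainDist dist (e n) x y < ENNReal.ofReal (ρ x y + e n) := by
        refine lt_of_le_of_lt ((hDleR n x y).trans (hRofReal x y).le) ?_
        rw [ENNReal.ofReal_lt_ofReal_iff (by positivity)]
        linarith [hepos n, hρnn x y]
      rw [chainDist] at hb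
      obtain ⟨c, hc⟩ := iInf_lt_iff.mp hb
      obtain ⟨⟨N, f⟩, hN, h0, hN', hlt⟩ := c
      replace hN : 0 < N := hN
      replace h0 : f 0 = x := h0
      replace hN' : f N = y := hN'
      replace hlt : ∀ i < N, dist (f i) (f (i+1)) < e n := hlt
      replace hc : ∑ i ∈ Finset.range N, ENNReal.ofReal (dist (f i) (f (i+1)))
          < ENNReal.ofReal (ρ x y + e n) := hc
      set g : ℕ → ℝ := fun i => dist (f i) (f (i+1)) with hg
      set P : ℕ → ℝ := fun k => ∑ i ∈ Finset.range k, g i with hP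
      have hgnn : ∀ i, 0 ≤ g i := fun i => dist_nonneg
      have hσnn : 0 ≤ P N := Finset.sum_nonneg fun i _ => hgnn i
      have hσlt : P N < ρ x y + e n := by
        have h1 : ENNReal.ofReal (P N) < ENNReal.ofReal (ρ x y + e n) := by
          rw [hP]
          rw [ENNReal.ofReal_sum_of_nonneg (fun i _ => hgnn i)]
          exact hc
        exact (ENNReal.ofReal_lt_ofReal_iff_of_nonneg hσnn).1 h1
      set k : ℕ := Nat.findGreatest (fun k => P k ≤ P N / 2) N with hk
      have hP0 : P 0 = 0 := by simp [hP]
      have hk1 : P k ≤ P N / 2 := by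
        rw [hk]
        apply Nat.findGreatest_spec (P := fun j => P j ≤ P N / 2) (Nat.zero_le N)
        show P 0 ≤ P N / 2
        rw [hP0]
        linarith
      have hkN : k ≤ N := Nat.findGreatest_le N
      have hPsucc : ∀ j, P (j+1) = P j + g j := by
        intro j
        rw [hP]
        simp [Finset.sum_range_succ]
      have htail : P N - P k ≤ P N / 2 + e n := by
        rcases eq_or_lt_of_le hkN with heq | hlt2
        · rw [heq]
          have := hepos n
          linarith
        · have hng : ¬ (P (k+1) ≤ P N / 2) := by
            apply Nat.findGreatest_is_greatest (P := fun j => P j ≤ P N / 2) (n := N) (k := k+1)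
            · omega
            · omega
          have hg2 : g k < e n := hlt k (by omega)
          have := hPsucc k
          push_neg at hng
          linarith
      refine ⟨f k, ?_, ?_, ?_⟩
      · have h1 : dist (f 0) (f k) ≤ P k := dist_le_sum_range f k
        rw [h0] at h1
        have : P N / 2 ≤ (ρ x y + e n)/2 := by linarith
        linarith
      · by_cases hk0 : k = 0
        · have : f k = x := by rw [hk0, h0]
          rw [this, chainDist_self (hepos n)]
          exact zero_le
        · calc chainDist dist (e n) x (f k)
              ≤ ∑ i ∈ Finset.range k, ENNReal.ofReal (dist (f i) (f (i+1))) :=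
              chainDist_le_chain k f (by omega) h0 rfl (fun i hi => hlt i (by omega))
            _ = ENNReal.ofReal (P k) := by
              rw [hP, ENNReal.ofReal_sum_of_nonneg (fun i _ => hgnn i)]
            _ ≤ ENNReal.ofReal ((ρ x y + e n)/2) := by
              refine ENNReal.ofReal_le_ofReal ?_
              linarith
      · by_cases hkN' : k = N
        · have : f k = y := by rw [hkN', hN']
          rw [this, chainDist_self (hepos n)]
          exact zero_le
        · have hsplit : P N = P k + ∑ i ∈ Finset.range (N - k), g (k + i) := by
            rw [hP]
            have := sum_range_split g k (N - k)
            rw [show k + (N - k) = N from by omega] at this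
            exact this
          calc chainDist dist (e n) (f k) y
              ≤ ∑ i ∈ Finset.range (N - k), ENNReal.ofReal
                  (dist ((fun i => f (k + i)) i) ((fun i => f (k + i)) (i+1))) := by
                refine chainDist_le_chain (N - k) (fun i => f (k + i)) (by omega) rfl ?_ ?_
                · show f (k + (N - k)) = y
                  rw [show k + (N - k) = N from by omega, hN']
                · intro i hi
                  show dist (f (k + i)) (f (k + (i+1))) < e n
                  rw [show k + (i+1) = (k+i) + 1 from by omega]
                  exact hlt (k+i) (by omega)
            _ = ENNReal.ofReal (∑ i ∈ Finset.range (N - k), g (k + i)) := by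
                rw [ENNReal.ofReal_sum_of_nonneg (fun i _ => hgnn _)]
                refine Finset.sum_congr rfl fun i _ => ?_
                show ENNReal.ofReal (dist (f (k+i)) (f (k+(i+1)))) = _
                rw [show k + (i+1) = (k+i) + 1 from by omega]
            _ ≤ ENNReal.ofReal ((ρ x y + e n)/2 + e n) := by
                refine ENNReal.ofReal_le_ofReal ?_
                have h5 : ∑ i ∈ Finset.range (N - k), g (k + i) = P N - P k := by
                  linarith [hsplit]
                rw [h5]
                have : P N / 2 ≤ (ρ x y + e n)/2 := by linarith
                linarith
    choose z hz1 hz2 hz3 using hchains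
    have hzK : ∀ n, z n ∈ closure (ball x ((ρ x y + 1)/2 + 1)) := by
      intro n
      refine subset_closure ?_
      rw [mem_ball, dist_comm]
      have he1 : e n ≤ 1 := by
        have := heanti 0 n (Nat.zero_le n)
        simpa [he] using this
      have := hz1 n
      have h2 : (ρ x y + e n)/2 ≤ (ρ x y + 1)/2 := by linarith
      linarith
    obtain ⟨w, -, φ, hφ, hφlim⟩ := (hrel x ((ρ x y + 1)/2 + 1)).tendsto_subseq hzK
    have hφge : ∀ j, j ≤ φ j := fun j => hφ.le_apply
    have hdzw : Tendsto (fun j => dist (z (φ j)) w) atTop (𝓝 0) :=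
      tendsto_iff_dist_tendsto_zero.1 hφlim
    have heφ : Tendsto (fun j => e (φ j)) atTop (𝓝 0) :=
      helim.comp hφ.tendsto_atTop
    have hDe : ∀ (a b : X) (n : ℕ), (chainDist dist (e n) a b).toReal ≤ ρ a b := by
      intro a b n
      have h1 := (hDleR n a b).trans (hRofReal a b).le
      exact ENNReal.toReal_le_of_le_ofReal (hρnn a b) h1
    have hDnetop : ∀ (ε : ℝ) (a b : X), 0 < ε → chainDist dist ε a b ≠ ⊤ := by
      intro ε a b hε
      exact ((hch ε hε a b).trans_lt ofReal_lt_top).ne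
    have h1 : ρ x w ≤ ρ x y / 2 := by
      have hRxw : R x w ≤ ENNReal.ofReal (ρ x y / 2) := by
        refine iSup_le fun n => ?_
        rw [ENNReal.le_ofReal_iff_toReal_le (hDnetop _ _ _ (hepos n)) (by positivity)]
        have hev : ∀ᶠ j in atTop, (chainDist dist (e n) x w).toReal
            ≤ (ρ x y + e (φ j))/2 + C * dist (z (φ j)) w := by
          filter_upwards [eventually_ge_atTop n] with j hj
          have hφj : n ≤ φ j := le_trans hj (hφge j)
          have step1 : chainDist dist (e n) x w
              ≤ chainDist dist (e n) x (z (φ j)) + chainDist dist (e n) (z (φ j)) w :=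
            chainDist_triangle _ _ _ _
          have step2 : chainDist dist (e n) x (z (φ j))
              ≤ ENNReal.ofReal ((ρ x y + e (φ j))/2) :=
            le_trans (chainDist_anti (heanti n (φ j) hφj) x (z (φ j))) (hz2 (φ j))
          have step3 : chainDist dist (e n) (z (φ j)) w
              ≤ ENNReal.ofReal (C * dist (z (φ j)) w) := hch _ (hepos n) _ _
          have step4 : chainDist dist (e n) x w
              ≤ ENNReal.ofReal ((ρ x y + e (φ j))/2 + C * dist (z (φ j)) w) := by
            rw [ENNReal.ofReal_add
              (div_nonneg (by linarith [hρnn x y, (hepos (φ j)).le]) (by norm_num))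
              (mul_nonneg (by linarith) dist_nonneg)]
            exact step1.trans (add_le_add step2 step3)
          exact ENNReal.toReal_le_of_le_ofReal
            (add_nonneg (div_nonneg (by linarith [hρnn x y, (hepos (φ j)).le]) (by norm_num))
              (mul_nonneg (by linarith) dist_nonneg)) step4
        have hlim : Tendsto (fun j => (ρ x y + e (φ j))/2 + C * dist (z (φ j)) w)
            atTop (𝓝 (ρ x y / 2)) := by
          have t1 : Tendsto (fun j => (ρ x y + e (φ j))/2) atTop (𝓝 ((ρ x y + 0)/2)) :=
            (tendsto_const_nhds.add heφ).div_const 2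
          have t2 : Tendsto (fun j => C * dist (z (φ j)) w) atTop (𝓝 (C * 0)) :=
            hdzw.const_mul C
          have := t1.add t2
          simpa using this
        exact ge_of_tendsto hlim hev
      exact ENNReal.toReal_le_of_le_ofReal (div_nonneg (hρnn x y) (by norm_num)) hRxw
    have h2 : ρ w y ≤ ρ x y / 2 := by
      have hRwy : R w y ≤ ENNReal.ofReal (ρ x y / 2) := by
        refine iSup_le fun n => ?_
        rw [ENNReal.le_ofReal_iff_toReal_le (hDnetop _ _ _ (hepos n)) (div_nonneg (hρnn x y) (by norm_num))]
        have hev : ∀ᶠ j in atTop, (chainDist dist (e n) w y).toReal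
            ≤ C * dist (z (φ j)) w + ((ρ x y + e (φ j))/2 + e (φ j)) := by
          filter_upwards [eventually_ge_atTop n] with j hj
          have hφj : n ≤ φ j := le_trans hj (hφge j)
          have step1 : chainDist dist (e n) w y
              ≤ chainDist dist (e n) w (z (φ j)) + chainDist dist (e n) (z (φ j)) y :=
            chainDist_triangle _ _ _ _
          have step2 : chainDist dist (e n) (z (φ j)) y
              ≤ ENNReal.ofReal ((ρ x y + e (φ j))/2 + e (φ j)) :=
            le_trans (chainDist_anti (heanti n (φ j) hφj) _ _) (hz3 (φ j))
          have step3 : chainDist dist (e n) w (z (φ j))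
              ≤ ENNReal.ofReal (C * dist (z (φ j)) w) := by
            have := hch _ (hepos n) w (z (φ j))
            rwa [dist_comm w (z (φ j))] at this
          have hnn2 : (0:ℝ) ≤ (ρ x y + e (φ j))/2 + e (φ j) :=
            add_nonneg (div_nonneg (by linarith [hρnn x y, (hepos (φ j)).le]) (by norm_num))
              (hepos (φ j)).le
          have step4 : chainDist dist (e n) w y
              ≤ ENNReal.ofReal (C * dist (z (φ j)) w + ((ρ x y + e (φ j))/2 + e (φ j))) := by
            rw [ENNReal.ofReal_add (mul_nonneg (by linarith) dist_nonneg) hnn2]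
            exact step1.trans (add_le_add step3 step2)
          exact ENNReal.toReal_le_of_le_ofReal
            (add_nonneg (mul_nonneg (by linarith) dist_nonneg) hnn2) step4
        have hlim : Tendsto (fun j => C * dist (z (φ j)) w + ((ρ x y + e (φ j))/2 + e (φ j)))
            atTop (𝓝 (ρ x y / 2)) := by
          have t1 : Tendsto (fun j => (ρ x y + e (φ j))/2) atTop (𝓝 ((ρ x y + 0)/2)) :=
            (tendsto_const_nhds.add heφ).div_const 2
          have t2 : Tendsto (fun j => C * dist (z (φ j)) w) atTop (𝓝 (C * 0)) :=
            hdzw.const_mul C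
          have := t2.add (t1.add heφ)
          simpa using this
        exact ge_of_tendsto hlim hev
      exact ENNReal.toReal_le_of_le_ofReal (div_nonneg (hρnn x y) (by norm_num)) hRwy
    have htr := hρtri x w y
    exact ⟨w, le_antisymm h1 (by linarith), le_antisymm h2 (by linarith)⟩
  haveI : CompleteSpace X := inferInstance
  refine ⟨ρ, ⟨hρsymm, hρeq0, hρtri⟩,
    geodesic_of_midpoints ρ C hρsymm hρself hρtri hρlb hρub hmid, ?_⟩
  intro x y
  refine ⟨?_, hρub x y⟩
  have hC0 : (0:ℝ) < C := lt_of_lt_of_le one_pos hC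
  have hinv : C⁻¹ ≤ 1 := by
    rw [inv_le_one₀ hC0]
    exact hC
  calc C⁻¹ * dist x y ≤ 1 * dist x y := mul_le_mul_of_nonneg_right hinv dist_nonneg
    _ = dist x y := one_mul _
    _ ≤ ρ x y := hρlb x y

end Forward

section Backward

variable {X : Type*} [MetricSpace X]

lemma backward_construction (C : ℝ) (hC : 1 ≤ C) (ρ : X → X → ℝ)
    (hgeo : IsGeodesicDist ρ)
    (hbnd : ∀ x y : X, C⁻¹ * dist x y ≤ ρ x y ∧ ρ x y ≤ C * dist x y) :
    ∀ ε : ℝ, 0 < ε → ∀ x y : X,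
      chainDist dist ε x y ≤ ENNReal.ofReal ((C * C) * dist x y) := by
  intro ε hε x y
  have hC0 : (0:ℝ) < C := lt_of_lt_of_le one_pos hC
  have hdle : ∀ a b : X, dist a b ≤ C * ρ a b := by
    intro a b
    have h := (hbnd a b).1
    have h2 : C * (C⁻¹ * dist a b) ≤ C * ρ a b :=
      mul_le_mul_of_nonneg_left h hC0.le
    calc dist a b = C * (C⁻¹ * dist a b) := by field_simp
      _ ≤ C * ρ a b := h2
  have hρnn : 0 ≤ ρ x y := le_trans (by positivity) (hbnd x y).1
  have hρub : ρ x y ≤ C * dist x y := (hbnd x y).2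
  obtain ⟨γ, hγ0, hγ1, hγ⟩ := hgeo x y
  obtain ⟨N0, hN0⟩ := exists_nat_gt (C * (C * dist x y) / ε)
  set N : ℕ := N0 + 1 with hNdef
  have hN : 0 < N := Nat.succ_pos _
  have hNR : (0:ℝ) < (N:ℝ) := by positivity
  have hNgt : C * (C * dist x y) / ε < (N:ℝ) := by
    refine lt_of_lt_of_le hN0 ?_
    exact_mod_cast Nat.le_succ N0
  have hkey : C * (C * dist x y) < (N:ℝ) * ε := by
    rw [div_lt_iff₀ hε] at hNgt
    linarith
  set f : ℕ → X := fun i => γ ((i:ℝ) / (N:ℝ)) with hf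
  have hf0 : f 0 = x := by
    rw [hf]
    simpa using hγ0
  have hfN : f N = y := by
    rw [hf]
    simp only [div_self (ne_of_gt hNR)]
    exact hγ1
  have hlink : ∀ i < N, dist (f i) (f (i+1)) ≤ C * ρ x y / N := by
    intro i hi
    have h1 : (i:ℝ)/(N:ℝ) ∈ Set.Icc (0:ℝ) 1 := by
      constructor
      · positivity
      · rw [div_le_one hNR]
        exact_mod_cast Nat.le_of_lt hi
    have h2 : ((i+1:ℕ):ℝ)/(N:ℝ) ∈ Set.Icc (0:ℝ) 1 := by
      constructor
      · positivity
      · rw [div_le_one hNR]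
        exact_mod_cast hi
    have hγval := hγ _ h1 _ h2
    have habs : |(i:ℝ)/(N:ℝ) - ((i+1:ℕ):ℝ)/(N:ℝ)| = 1/(N:ℝ) := by
      push_cast
      rw [abs_of_nonpos (by
        rw [div_sub_div_same]
        apply div_nonpos_of_nonpos_of_nonneg <;> linarith)]
      field_simp
      ring
    calc dist (f i) (f (i+1)) ≤ C * ρ (f i) (f (i+1)) := hdle _ _
      _ = C * (1/(N:ℝ) * ρ x y) := by rw [hf]; rw [hγval, habs]
      _ = C * ρ x y / N := by ring
  have hlink_lt : ∀ i < N, dist (f i) (f (i+1)) < ε := by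
    intro i hi
    refine lt_of_le_of_lt (hlink i hi) ?_
    rw [div_lt_iff₀ hNR]
    have : C * ρ x y ≤ C * (C * dist x y) :=
      mul_le_mul_of_nonneg_left hρub hC0.le
    calc C * ρ x y ≤ C * (C * dist x y) := this
      _ < (N:ℝ) * ε := hkey
      _ = ε * N := by ring
  have hsum : ∑ i ∈ Finset.range N, dist (f i) (f (i+1)) ≤ C * ρ x y := by
    calc ∑ i ∈ Finset.range N, dist (f i) (f (i+1))
        ≤ ∑ _i ∈ Finset.range N, C * ρ x y / N :=
          Finset.sum_le_sum (fun i hi => hlink i (Finset.mem_range.1 hi))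
      _ = (N:ℝ) * (C * ρ x y / N) := by
          rw [Finset.sum_const, Finset.card_range, nsmul_eq_mul]
      _ = C * ρ x y := by field_simp
  calc chainDist dist ε x y
      ≤ ∑ i ∈ Finset.range N, ENNReal.ofReal (dist (f i) (f (i+1))) :=
        chainDist_le_chain N f hN hf0 hfN hlink_lt
    _ = ENNReal.ofReal (∑ i ∈ Finset.range N, dist (f i) (f (i+1))) :=
        (ENNReal.ofReal_sum_of_nonneg (fun i _ => dist_nonneg)).symm
    _ ≤ ENNReal.ofReal ((C * C) * dist x y) := by
        refine ENNReal.ofReal_le_ofReal ?_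
        have : C * ρ x y ≤ C * (C * dist x y) :=
          mul_le_mul_of_nonneg_left hρub hC0.le
        nlinarith [hsum]

end Backward

/-- Proposition A.1: for a metric space in which all open balls are
relatively compact, the chain condition holds if and only if the metric is bi-Lipschitz
equivalent to a geodesic metric. -/
theorem chain_condition_iff_biLipschitz_geodesic {X : Type*} [MetricSpace X]
    (hrel : ∀ (x : X) (r : ℝ), IsCompact (closure (Metric.ball x r))) :
    (∃ C : ℝ, 1 ≤ C ∧ ∀ ε : ℝ, 0 < ε → ∀ x y : X,
        chainDist dist ε x y ≤ ENNReal.ofReal (C * dist x y)) ↔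
      (∃ C : ℝ, 1 ≤ C ∧ ∃ ρ : X → X → ℝ, IsMetricDist ρ ∧ IsGeodesicDist ρ ∧
        ∀ x y : X, C⁻¹ * dist x y ≤ ρ x y ∧ ρ x y ≤ C * dist x y) := by
  constructor
  · rintro ⟨C, hC, hch⟩
    obtain ⟨ρ, hm, hg, hb⟩ := forward_construction hrel C hC hch
    exact ⟨C, hC, ρ, hm, hg, hb⟩
  · rintro ⟨C, hC, ρ, _hm, hg, hb⟩
    refine ⟨C * C, by nlinarith, ?_⟩
    exact backward_construction C hC ρ hg hb
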